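/- Let K be a nontrivially normed field which is locally compact and whose norm is ultrametric (satisfies ‖x+y‖ ≤ max(‖x‖,‖y‖)), and assume ‖(2:K)‖ = 1 (i.e., K is a non-archimedean local field of residual characteristic not 2). Then for every n and every symmetric n×n matrix B over K whose determinant is a unit, there exists an invertible n×n matrix M over K, all of whose entries and all of whose inverse's entries have norm at most 1, such that Mᵀ·B·M is a diagonal matrix. -/

import Mathlib

open Matrix

namespace Stmt0Aux

lemma std_transpose {n : ℕ} {α : Type*} [DecidableEq (Fin n)] [Zero α] (i j : Fin n) (c : α) :
    (single i j c)ᵀ = single j i c := by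
  ext a b
  simp [single, and_comm]

variable {K : Type*} [NormedField K] [IsUltrametricDist K]

lemma norm_sum_le {ι : Type*} (s : Finset ι) (f : ι → K) {C : ℝ} (hC : 0 ≤ C)
    (h : ∀ i ∈ s, ‖f i‖ ≤ C) : ‖∑ i ∈ s, f i‖ ≤ C :=
  IsUltrametricDist.norm_sum_le_of_forall_le_of_nonneg hC h

lemma mul_entry_le {n : ℕ} {A C : Matrix (Fin n) (Fin n) K} {a c : ℝ}
    (ha : 0 ≤ a) (hc : 0 ≤ c) (hA : ∀ i j, ‖A i j‖ ≤ a) (hC : ∀ i j, ‖C i j‖ ≤ c) :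
    ∀ i j, ‖(A * C) i j‖ ≤ a * c := by
  intro i j
  rw [Matrix.mul_apply]
  refine norm_sum_le _ _ (mul_nonneg ha hc) fun k _ => ?_
  rw [norm_mul]
  exact mul_le_mul (hA i k) (hC k j) (norm_nonneg _) ha

lemma mul_entry_le_one {n : ℕ} {A C : Matrix (Fin n) (Fin n) K}
    (hA : ∀ i j, ‖A i j‖ ≤ 1) (hC : ∀ i j, ‖C i j‖ ≤ 1) :
    ∀ i j, ‖(A * C) i j‖ ≤ 1 := by
  simpa using mul_entry_le zero_le_one zero_le_one hA hC

lemma congr_entry_le {n : ℕ} {M B : Matrix (Fin n) (Fin n) K} {m : ℝ}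
    (hm : 0 ≤ m) (hM : ∀ i j, ‖M i j‖ ≤ 1) (hB : ∀ i j, ‖B i j‖ ≤ m) :
    ∀ i j, ‖(Mᵀ * B * M) i j‖ ≤ m := by
  have h1 : ∀ i j, ‖(Mᵀ * B) i j‖ ≤ 1 * m :=
    mul_entry_le zero_le_one hm (fun i j => hM j i) hB
  have h2 := mul_entry_le (mul_nonneg zero_le_one hm) zero_le_one h1 hM
  simpa using h2

lemma one_entry_le {n : ℕ} : ∀ i j, ‖(1 : Matrix (Fin n) (Fin n) K) i j‖ ≤ 1 := by
  intro i j
  rw [Matrix.one_apply]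
  split <;> simp

lemma congr_isSymm {n : ℕ} {M B : Matrix (Fin n) (Fin n) K} (hB : B.IsSymm) :
    (Mᵀ * B * M).IsSymm := by
  unfold Matrix.IsSymm at *
  rw [Matrix.transpose_mul, Matrix.transpose_mul, Matrix.transpose_transpose, hB,
    Matrix.mul_assoc]

/-- Find a pivot: a base change `P` in `GL(O)` and an index `i0` such that the `(i0,i0)` entry
of `Pᵀ B P` is nonzero and dominates all entries in norm. -/
lemma exists_pivot {n : ℕ} (h2 : ‖(2 : K)‖ = 1) (B : Matrix (Fin (n+1)) (Fin (n+1)) K)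
    (hB : B.IsSymm) (hB0 : B ≠ 0) :
    ∃ (P P' : Matrix (Fin (n+1)) (Fin (n+1)) K) (i0 : Fin (n+1)),
      P * P' = 1 ∧ P' * P = 1 ∧ (∀ i j, ‖P i j‖ ≤ 1) ∧ (∀ i j, ‖P' i j‖ ≤ 1) ∧
      (∀ i j, ‖(Pᵀ * B * P) i j‖ ≤ ‖(Pᵀ * B * P) i0 i0‖) ∧ (Pᵀ * B * P) i0 i0 ≠ 0 := by
  obtain ⟨⟨i, j⟩, -, hp⟩ := Finset.exists_mem_eq_sup' (Finset.univ_nonempty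
    (α := Fin (n+1) × Fin (n+1))) (fun p => ‖B p.1 p.2‖)
  set m : ℝ := ‖B i j‖ with hm
  have hmax : ∀ a b, ‖B a b‖ ≤ m := by
    intro a b
    calc ‖B a b‖ ≤ Finset.univ.sup' (Finset.univ_nonempty) (fun p : Fin (n+1) × Fin (n+1) => ‖B p.1 p.2‖) :=
          Finset.le_sup' (fun p : Fin (n+1) × Fin (n+1) => ‖B p.1 p.2‖) (Finset.mem_univ (a, b))
      _ = m := hp
  have hm0 : 0 < m := by
    have : ∃ i j, B i j ≠ 0 := by
      by_contra h
      push_neg at h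
      exact hB0 (by ext i j; simpa using h i j)
    obtain ⟨a, b, hab⟩ := this
    exact lt_of_lt_of_le (norm_pos_iff.mpr hab) (hmax a b)
  by_cases hd : ∃ k, ‖B k k‖ = m
  · obtain ⟨k, hi⟩ := hd
    refine ⟨1, 1, k, by simp, by simp, one_entry_le, one_entry_le, ?_, ?_⟩
    · intro a b
      simp only [Matrix.transpose_one, Matrix.one_mul, Matrix.mul_one]
      rw [hi]
      exact hmax a b
    · simp only [Matrix.transpose_one, Matrix.one_mul, Matrix.mul_one]
      intro h
      rw [h] at hi
      simp only [norm_zero] at hi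
      exact hm0.ne hi
  · push_neg at hd
    have hij : i ≠ j := by
      intro h
      apply hd i
      rw [hm]
      rw [← h]
    have hdlt : ∀ k, ‖B k k‖ < m := fun k => lt_of_le_of_ne (hmax k k) (hd k)
    set S : Matrix (Fin (n+1)) (Fin (n+1)) K := single j i 1 with hS
    have hSS : S * S = 0 := single_mul_single_of_ne 1 _ _ _ hij 1
    refine ⟨1 + S, 1 - S, i, ?_, ?_, ?_, ?_, ?_, ?_⟩
    · rw [add_mul, one_mul, mul_sub, mul_one, hSS, sub_zero]; abel
    · rw [sub_mul, one_mul, mul_add, mul_one, hSS, add_zero]; abel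
    · intro a b
      rcases eq_or_ne a b with rfl | hab
      · have : S a a = 0 := by
          rw [hS]
          rw [single_apply_of_ne]
          rintro ⟨rfl, rfl⟩
          exact hij rfl
        simp [Matrix.add_apply, this, Matrix.one_apply_eq]
      · have h1 : (1 : Matrix (Fin (n+1)) (Fin (n+1)) K) a b = 0 := Matrix.one_apply_ne hab
        simp only [Matrix.add_apply, h1, zero_add, hS]
        rw [Matrix.single]
        simp only [Matrix.of_apply]
        split <;> simp
    · intro a b
      rcases eq_or_ne a b with rfl | hab
      · have : S a a = 0 := by
          rw [hS, single_apply_of_ne]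
          rintro ⟨rfl, rfl⟩
          exact hij rfl
        simp [Matrix.sub_apply, this, Matrix.one_apply_eq]
      · have h1 : (1 : Matrix (Fin (n+1)) (Fin (n+1)) K) a b = 0 := Matrix.one_apply_ne hab
        simp only [Matrix.sub_apply, h1, zero_sub, norm_neg, hS]
        rw [Matrix.single]
        simp only [Matrix.of_apply]
        split <;> simp
    all_goals {
      have hexp : (1 + S)ᵀ * B * (1 + S) = B + B * S + Sᵀ * B + Sᵀ * B * S := by
        rw [Matrix.transpose_add, Matrix.transpose_one]
        noncomm_ring
      have hST : Sᵀ = single i j 1 := std_transpose _ _ _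
      have hval : ((1 + S)ᵀ * B * (1 + S) : Matrix (Fin (n+1)) (Fin (n+1)) K) i i
          = (B i i + B j j) + 2 * B i j := by
        rw [hexp]
        have e1 : (B * S) i i = B i j := by
          rw [hS, mul_single_apply_same, mul_one]
        have e2 : (Sᵀ * B) i i = B j i := by
          rw [hST, single_mul_apply_same, one_mul]
        have e3 : (Sᵀ * B * S) i i = B j j := by
          rw [hS, mul_single_apply_same, hST,
            single_mul_apply_same, mul_one, one_mul]
        have hsymm : B j i = B i j := by
          conv_lhs => rw [← hB]
          rfl
        simp only [Matrix.add_apply, e1, e2, e3, hsymm]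
        ring
      have hnorm : ‖((1 + S)ᵀ * B * (1 + S) : Matrix (Fin (n+1)) (Fin (n+1)) K) i i‖ = m := by
        rw [hval]
        have hlt : ‖B i i + B j j‖ < m :=
          lt_of_le_of_lt (IsUltrametricDist.norm_add_le_max _ _) (max_lt (hdlt i) (hdlt j))
        have h2m : ‖2 * B i j‖ = m := by rw [norm_mul, h2, one_mul]
        rw [IsUltrametricDist.norm_add_eq_max_of_norm_ne_norm (by rw [h2m]; exact hlt.ne),
          h2m, max_eq_right (le_of_lt (h2m ▸ hlt))]
      first
      | · intro a b
          have := congr_entry_le (M := 1 + S) (B := B) hm0.le ?_ hmax a b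
          · rw [hnorm]; exact this
          · intro a' b'
            rcases eq_or_ne a' b' with rfl | hab
            · have : S a' a' = 0 := by
                rw [hS, single_apply_of_ne]
                rintro ⟨rfl, rfl⟩
                exact hij rfl
              simp [Matrix.add_apply, this, Matrix.one_apply_eq]
            · have h1 : (1 : Matrix (Fin (n+1)) (Fin (n+1)) K) a' b' = 0 :=
                Matrix.one_apply_ne hab
              simp only [Matrix.add_apply, h1, zero_add, hS]
              rw [Matrix.single]
              simp only [Matrix.of_apply]
              split <;> simp
      | · intro h
          rw [h, norm_zero] at hnorm
          exact hm0.ne hnorm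
    }

end Stmt0Aux

namespace JBlock

variable {α : Type*} [CommRing α] {n : ℕ}

/-- The `(n+1) × n` matrix of the inclusion missing coordinate `i0`. -/
def Jmat (i0 : Fin (n+1)) : Matrix (Fin (n+1)) (Fin n) α :=
  Matrix.of fun a b => if a = i0.succAbove b then 1 else 0

lemma Jmat_apply (i0 : Fin (n+1)) (a : Fin (n+1)) (b : Fin n) :
    Jmat (α := α) i0 a b = if a = i0.succAbove b then 1 else 0 := rfl

lemma JmatT_apply (i0 : Fin (n+1)) (a : Fin n) (b : Fin (n+1)) :
    (Jmat (α := α) i0)ᵀ a b = if b = i0.succAbove a then 1 else 0 := rfl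

lemma Jmat_mul_apply {p : Type*} (i0 : Fin (n+1)) (Y : Matrix (Fin n) p α) (a' : Fin n) (b : p) :
    (Jmat (α := α) i0 * Y : Matrix (Fin (n+1)) p α) (i0.succAbove a') b = Y a' b := by
  rw [Matrix.mul_apply, Finset.sum_eq_single a']
  · rw [Jmat_apply, if_pos rfl, one_mul]
  · intro k _ hk
    rw [Jmat_apply, if_neg (by rw [Fin.succAbove_right_inj]; exact fun h => hk h.symm), zero_mul]
  · intro h
    exact absurd (Finset.mem_univ a') h

lemma Jmat_mul_apply_self {p : Type*} (i0 : Fin (n+1)) (Y : Matrix (Fin n) p α) (b : p) :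
    (Jmat (α := α) i0 * Y : Matrix (Fin (n+1)) p α) i0 b = 0 := by
  rw [Matrix.mul_apply]
  apply Finset.sum_eq_zero
  intro k _
  rw [Jmat_apply, if_neg (Fin.ne_succAbove i0 k), zero_mul]

lemma mul_JmatT_apply {p : Type*} (i0 : Fin (n+1)) (Y : Matrix p (Fin n) α) (a : p) (b' : Fin n) :
    (Y * (Jmat (α := α) i0)ᵀ : Matrix p (Fin (n+1)) α) a (i0.succAbove b') = Y a b' := by
  rw [Matrix.mul_apply, Finset.sum_eq_single b']
  · rw [JmatT_apply, if_pos rfl, mul_one]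
  · intro k _ hk
    rw [JmatT_apply, if_neg (by rw [Fin.succAbove_right_inj]; exact fun h => hk h.symm), mul_zero]
  · intro h
    exact absurd (Finset.mem_univ b') h

lemma mul_JmatT_apply_self {p : Type*} (i0 : Fin (n+1)) (Y : Matrix p (Fin n) α) (a : p) :
    (Y * (Jmat (α := α) i0)ᵀ : Matrix p (Fin (n+1)) α) a i0 = 0 := by
  rw [Matrix.mul_apply]
  apply Finset.sum_eq_zero
  intro k _
  rw [JmatT_apply, if_neg (Fin.ne_succAbove i0 k), mul_zero]

lemma JmatT_mul_Jmat (i0 : Fin (n+1)) :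
    ((Jmat (α := α) i0)ᵀ * Jmat (α := α) i0 : Matrix (Fin n) (Fin n) α) = 1 := by
  ext a b
  rw [Matrix.mul_apply, Finset.sum_eq_single (i0.succAbove a)]
  · rw [JmatT_apply, if_pos rfl, one_mul, Jmat_apply, Matrix.one_apply]
    simp [Fin.succAbove_right_inj]
  · intro k _ hk
    rw [JmatT_apply, if_neg hk, zero_mul]
  · intro h
    exact absurd (Finset.mem_univ _) h

lemma JmatT_mul_std (i0 : Fin (n+1)) :
    ((Jmat (α := α) i0)ᵀ * single i0 i0 (1 : α) : Matrix (Fin n) (Fin (n+1)) α) = 0 := by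
  ext a b
  rw [Matrix.mul_apply]
  apply Finset.sum_eq_zero
  intro k _
  by_cases hk : k = i0
  · rw [JmatT_apply, hk, if_neg (Fin.ne_succAbove i0 a), zero_mul]
  · rw [single_apply_of_row_ne (Ne.symm hk) i0 b 1, mul_zero]

lemma std_mul_Jmat (i0 : Fin (n+1)) :
    (single i0 i0 (1 : α) * Jmat (α := α) i0 : Matrix (Fin (n+1)) (Fin n) α) = 0 := by
  ext a b
  rw [Matrix.mul_apply]
  apply Finset.sum_eq_zero
  intro k _
  by_cases hk : k = i0
  · rw [Jmat_apply, hk, if_neg (Fin.ne_succAbove i0 b), mul_zero]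
  · rw [single_apply_of_col_ne i0 a (Ne.symm hk) 1, zero_mul]

lemma Jmat_mul_JmatT (i0 : Fin (n+1)) :
    (Jmat (α := α) i0 * (Jmat (α := α) i0)ᵀ : Matrix (Fin (n+1)) (Fin (n+1)) α)
      = 1 - single i0 i0 (1 : α) := by
  ext a b
  rcases eq_or_ne a i0 with rfl | ha
  · rw [Jmat_mul_apply_self]
    rcases eq_or_ne b a with rfl | hb
    · simp [Matrix.sub_apply, Matrix.one_apply_eq]
    · rw [Matrix.sub_apply, Matrix.one_apply_ne (fun h => hb h.symm),
        single_apply_of_col_ne a a (fun h => hb h.symm) 1, sub_zero]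
  · obtain ⟨a', rfl⟩ := Fin.exists_succAbove_eq ha
    rw [Jmat_mul_apply]
    rw [Matrix.sub_apply, single_apply_of_row_ne (Ne.symm ha) i0 b 1, sub_zero]
    rw [JmatT_apply, Matrix.one_apply]
    simp [eq_comm]

/-- Assembly of a block matrix `diag(c, X)` along coordinate `i0`. -/
def asm (i0 : Fin (n+1)) (X : Matrix (Fin n) (Fin n) α) (c : α) :
    Matrix (Fin (n+1)) (Fin (n+1)) α :=
  Jmat (α := α) i0 * X * (Jmat (α := α) i0)ᵀ + c • single i0 i0 (1 : α)

lemma asm_apply_succ (i0 : Fin (n+1)) (X : Matrix (Fin n) (Fin n) α) (c : α) (a' b' : Fin n) :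
    asm i0 X c (i0.succAbove a') (i0.succAbove b') = X a' b' := by
  rw [asm, Matrix.add_apply, Matrix.mul_assoc, Jmat_mul_apply, mul_JmatT_apply,
    Matrix.smul_apply, single_apply_of_row_ne (Fin.ne_succAbove i0 a') i0 _ 1,
    smul_zero, add_zero]

lemma asm_apply_row (i0 : Fin (n+1)) (X : Matrix (Fin n) (Fin n) α) (c : α) (b : Fin (n+1)) :
    asm i0 X c i0 b = if b = i0 then c else 0 := by
  rw [asm, Matrix.add_apply, Matrix.mul_assoc, Jmat_mul_apply_self, Matrix.smul_apply, zero_add]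
  rcases eq_or_ne b i0 with rfl | hb
  · rw [if_pos rfl, single_apply_same, smul_eq_mul, mul_one]
  · rw [single_apply_of_col_ne i0 i0 (Ne.symm hb) 1, if_neg hb, smul_zero]

lemma asm_apply_col (i0 : Fin (n+1)) (X : Matrix (Fin n) (Fin n) α) (c : α) (a : Fin (n+1)) :
    asm i0 X c a i0 = if a = i0 then c else 0 := by
  rw [asm, Matrix.add_apply, mul_JmatT_apply_self, Matrix.smul_apply, zero_add]
  rcases eq_or_ne a i0 with rfl | ha
  · rw [if_pos rfl, single_apply_same, smul_eq_mul, mul_one]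
  · rw [single_apply_of_row_ne (Ne.symm ha) i0 i0 1, if_neg ha, smul_zero]

lemma asm_mul (i0 : Fin (n+1)) (X Y : Matrix (Fin n) (Fin n) α) (c d : α) :
    asm i0 X d * asm i0 Y c = asm i0 (X * Y) (d * c) := by
  unfold asm
  have h1 : Jmat (α := α) i0 * X * (Jmat (α := α) i0)ᵀ * (Jmat (α := α) i0 * Y * (Jmat (α := α) i0)ᵀ)
      = Jmat (α := α) i0 * (X * Y) * (Jmat (α := α) i0)ᵀ := by
    simp only [Matrix.mul_assoc]
    rw [← Matrix.mul_assoc (Jmat (α := α) i0)ᵀ (Jmat (α := α) i0), JmatT_mul_Jmat, Matrix.one_mul]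
  have h2 : Jmat (α := α) i0 * X * (Jmat (α := α) i0)ᵀ * (c • single i0 i0 (1 : α)) = 0 := by
    rw [Matrix.mul_smul]
    simp only [Matrix.mul_assoc]
    rw [JmatT_mul_std]
    simp
  have h3 : (d • single i0 i0 (1 : α)) * (Jmat (α := α) i0 * Y * (Jmat (α := α) i0)ᵀ) = 0 := by
    rw [Matrix.smul_mul, ← Matrix.mul_assoc, ← Matrix.mul_assoc, std_mul_Jmat]
    simp
  have h4 : (d • single i0 i0 (1 : α)) * (c • single i0 i0 (1 : α))
      = (d * c) • single i0 i0 (1 : α) := by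
    rw [Matrix.smul_mul, Matrix.mul_smul, single_mul_single_same, mul_one, smul_smul]
  rw [add_mul, mul_add, mul_add, h1, h2, h3, h4, add_zero, zero_add]

lemma asm_transpose (i0 : Fin (n+1)) (X : Matrix (Fin n) (Fin n) α) (c : α) :
    (asm i0 X c)ᵀ = asm i0 Xᵀ c := by
  unfold asm
  rw [Matrix.transpose_add]
  congr 1
  · rw [Matrix.transpose_mul, Matrix.transpose_mul, Matrix.transpose_transpose, Matrix.mul_assoc]
  · rw [Matrix.transpose_smul, Stmt0Aux.std_transpose]

lemma asm_one (i0 : Fin (n+1)) : asm i0 (1 : Matrix (Fin n) (Fin n) α) 1 = 1 := by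
  unfold asm
  rw [Matrix.mul_one, Jmat_mul_JmatT, one_smul]
  abel

lemma eq_asm (i0 : Fin (n+1)) (C : Matrix (Fin (n+1)) (Fin (n+1)) α)
    (h0 : ∀ k, k ≠ i0 → C i0 k = 0) (h0' : ∀ k, k ≠ i0 → C k i0 = 0) :
    C = asm i0 (C.submatrix i0.succAbove i0.succAbove) (C i0 i0) := by
  ext a b
  rcases eq_or_ne a i0 with rfl | ha
  · rw [asm_apply_row]
    rcases eq_or_ne b a with rfl | hb
    · simp
    · rw [if_neg hb, h0 b hb]
  · rcases eq_or_ne b i0 with rfl | hb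
    · rw [asm_apply_col, if_neg ha, h0' a ha]
    · obtain ⟨a', rfl⟩ := Fin.exists_succAbove_eq ha
      obtain ⟨b', rfl⟩ := Fin.exists_succAbove_eq hb
      rw [asm_apply_succ, Matrix.submatrix_apply]

lemma asm_isDiag (i0 : Fin (n+1)) {X : Matrix (Fin n) (Fin n) α} (hX : X.IsDiag) (c : α) :
    (asm i0 X c).IsDiag := by
  intro a b hab
  rcases eq_or_ne a i0 with rfl | ha
  · rw [asm_apply_row, if_neg (fun h => hab h.symm)]
  · rcases eq_or_ne b i0 with rfl | hb
    · rw [asm_apply_col, if_neg ha]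
    · obtain ⟨a', rfl⟩ := Fin.exists_succAbove_eq ha
      obtain ⟨b', rfl⟩ := Fin.exists_succAbove_eq hb
      rw [asm_apply_succ]
      exact hX (fun h => hab (by rw [h]))

end JBlock

namespace Stmt0Aux

variable {K : Type*} [NormedField K] [IsUltrametricDist K]

lemma asm_entry_le {n : ℕ} (i0 : Fin (n+1)) {X : Matrix (Fin n) (Fin n) K}
    (hX : ∀ i j, ‖X i j‖ ≤ 1) {c : K} (hc : ‖c‖ ≤ 1) :
    ∀ a b, ‖JBlock.asm i0 X c a b‖ ≤ 1 := by
  intro a b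
  rcases eq_or_ne a i0 with rfl | ha
  · rw [JBlock.asm_apply_row]
    split <;> simp [hc]
  · rcases eq_or_ne b i0 with rfl | hb
    · rw [JBlock.asm_apply_col, if_neg ha]
      simp
    · obtain ⟨a', rfl⟩ := Fin.exists_succAbove_eq ha
      obtain ⟨b', rfl⟩ := Fin.exists_succAbove_eq hb
      rw [JBlock.asm_apply_succ]
      exact hX a' b'

end Stmt0Aux

namespace Stmt0Aux

variable {K : Type*} [NormedField K] [IsUltrametricDist K]

lemma key (h2 : ‖(2 : K)‖ = 1) :
    ∀ (n : ℕ) (B : Matrix (Fin n) (Fin n) K), B.IsSymm →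
    ∃ M M' : Matrix (Fin n) (Fin n) K, M * M' = 1 ∧ M' * M = 1 ∧
      (∀ i j, ‖M i j‖ ≤ 1) ∧ (∀ i j, ‖M' i j‖ ≤ 1) ∧ (Mᵀ * B * M).IsDiag := by
  intro n
  induction n with
  | zero =>
    intro B _
    exact ⟨1, 1, by simp, by simp, one_entry_le, one_entry_le, fun i => i.elim0⟩
  | succ n ih =>
    intro B hB
    by_cases hB0 : B = 0
    · refine ⟨1, 1, by simp, by simp, one_entry_le, one_entry_le, ?_⟩
      intro i j hij
      simp [hB0]
    · obtain ⟨P, P', i0, hPP', hP'P, hPle, hP'le, hBd, hBne⟩ := exists_pivot h2 B hB hB0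
      set B1 : Matrix (Fin (n+1)) (Fin (n+1)) K := Pᵀ * B * P with hB1def
      have hB1symm : B1.IsSymm := congr_isSymm hB
      set R : Matrix (Fin (n+1)) (Fin (n+1)) K :=
        Matrix.of fun a b => if a = i0 ∧ b ≠ i0 then -(B1 i0 b / B1 i0 i0) else 0 with hRdef
      have hRapp : ∀ a b, R a b = if a = i0 ∧ b ≠ i0 then -(B1 i0 b / B1 i0 i0) else 0 :=
        fun a b => rfl
      have hRR : R * R = 0 := by
        ext a b
        rw [Matrix.mul_apply, Matrix.zero_apply]
        apply Finset.sum_eq_zero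
        intro k _
        by_cases hk : k = i0
        · rw [hRapp a k, if_neg (by rw [hk]; rintro ⟨-, h⟩; exact h rfl), zero_mul]
        · rw [hRapp k b, if_neg (by rintro ⟨h, -⟩; exact hk h), mul_zero]
      have hUU' : (1 + R) * (1 - R) = 1 := by
        rw [add_mul, one_mul, mul_sub, mul_one, hRR, sub_zero]; abel
      have hU'U : (1 - R) * (1 + R) = 1 := by
        rw [sub_mul, one_mul, mul_add, mul_one, hRR, add_zero]; abel
      have hRle : ∀ a b, ‖R a b‖ ≤ 1 := by
        intro a b
        rw [hRapp]
        split
        · rw [norm_neg, norm_div]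
          exact div_le_one_of_le₀ (hBd i0 b) (norm_nonneg _)
        · simp
      have hRdiag : ∀ a, R a a = 0 := by
        intro a
        rw [hRapp]
        exact if_neg (by rintro ⟨h1, h2⟩; exact h2 h1)
      have hUle : ∀ a b, ‖(1 + R : Matrix (Fin (n+1)) (Fin (n+1)) K) a b‖ ≤ 1 := by
        intro a b
        rcases eq_or_ne a b with rfl | hab
        · rw [Matrix.add_apply, hRdiag, add_zero, Matrix.one_apply_eq]; simp
        · rw [Matrix.add_apply, Matrix.one_apply_ne hab, zero_add]; exact hRle a b
      have hU'le : ∀ a b, ‖(1 - R : Matrix (Fin (n+1)) (Fin (n+1)) K) a b‖ ≤ 1 := by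
        intro a b
        rcases eq_or_ne a b with rfl | hab
        · rw [Matrix.sub_apply, hRdiag, sub_zero, Matrix.one_apply_eq]; simp
        · rw [Matrix.sub_apply, Matrix.one_apply_ne hab, zero_sub, norm_neg]; exact hRle a b
      set C : Matrix (Fin (n+1)) (Fin (n+1)) K := (1 + R)ᵀ * B1 * (1 + R) with hCdef
      have hCsymm : C.IsSymm := congr_isSymm hB1symm
      have h3 : ∀ l, (Rᵀ * B1 : Matrix (Fin (n+1)) (Fin (n+1)) K) i0 l = 0 := by
        intro l
        rw [Matrix.mul_apply]
        apply Finset.sum_eq_zero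
        intro x _
        rw [Matrix.transpose_apply, hRapp, if_neg (by rintro ⟨-, h⟩; exact h rfl), zero_mul]
      have hC0 : ∀ k, k ≠ i0 → C i0 k = 0 := by
        intro k hk
        have hexp : C = B1 + B1 * R + Rᵀ * B1 + Rᵀ * B1 * R := by
          rw [hCdef, Matrix.transpose_add, Matrix.transpose_one]
          noncomm_ring
        have h2' : (B1 * R : Matrix (Fin (n+1)) (Fin (n+1)) K) i0 k = -(B1 i0 k) := by
          rw [Matrix.mul_apply, Finset.sum_eq_single i0]
          · rw [hRapp, if_pos ⟨rfl, hk⟩, mul_neg, mul_comm, div_mul_cancel₀ _ hBne]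
          · intro x _ hx
            rw [hRapp, if_neg (by rintro ⟨h, -⟩; exact hx h), mul_zero]
          · intro h
            exact absurd (Finset.mem_univ i0) h
        have h4 : (Rᵀ * B1 * R : Matrix (Fin (n+1)) (Fin (n+1)) K) i0 k = 0 := by
          rw [Matrix.mul_apply]
          apply Finset.sum_eq_zero
          intro x _
          rw [h3 x, zero_mul]
        rw [hexp]
        simp only [Matrix.add_apply]
        rw [h2', h3 k, h4]
        ring
      have hCk0 : ∀ k, k ≠ i0 → C k i0 = 0 := by
        intro k hk
        have h := hCsymm
        rw [Matrix.IsSymm] at h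
        calc C k i0 = Cᵀ i0 k := rfl
          _ = C i0 k := by rw [h]
          _ = 0 := hC0 k hk
      set D : Matrix (Fin n) (Fin n) K := C.submatrix i0.succAbove i0.succAbove with hDdef
      have hDsymm : D.IsSymm := by
        ext a b
        rw [Matrix.transpose_apply, hDdef, Matrix.submatrix_apply, Matrix.submatrix_apply]
        calc C (i0.succAbove b) (i0.succAbove a)
            = Cᵀ (i0.succAbove a) (i0.succAbove b) := rfl
          _ = C (i0.succAbove a) (i0.succAbove b) := by rw [hCsymm]
      obtain ⟨N, N', hNN', hN'N, hNle, hN'le, hNdiag⟩ := ih D hDsymm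
      set M3 : Matrix (Fin (n+1)) (Fin (n+1)) K := JBlock.asm i0 N 1 with hM3
      set M3' : Matrix (Fin (n+1)) (Fin (n+1)) K := JBlock.asm i0 N' 1 with hM3'
      have hM3M3' : M3 * M3' = 1 := by
        rw [hM3, hM3', JBlock.asm_mul, hNN', one_mul, JBlock.asm_one]
      have hM3'M3 : M3' * M3 = 1 := by
        rw [hM3, hM3', JBlock.asm_mul, hN'N, one_mul, JBlock.asm_one]
      have hM3le : ∀ a b, ‖M3 a b‖ ≤ 1 := asm_entry_le i0 hNle (by simp)
      have hM3'le : ∀ a b, ‖M3' a b‖ ≤ 1 := asm_entry_le i0 hN'le (by simp)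
      refine ⟨P * ((1 + R) * M3), M3' * ((1 - R) * P'), ?_, ?_, ?_, ?_, ?_⟩
      · calc (P * ((1 + R) * M3)) * (M3' * ((1 - R) * P'))
            = P * ((1 + R) * ((M3 * M3') * ((1 - R) * P'))) := by
              simp only [Matrix.mul_assoc]
          _ = 1 := by
              rw [hM3M3', Matrix.one_mul, ← Matrix.mul_assoc (1 + R) (1 - R) P', hUU',
                Matrix.one_mul, hPP']
      · calc (M3' * ((1 - R) * P')) * (P * ((1 + R) * M3))
            = M3' * ((1 - R) * ((P' * P) * ((1 + R) * M3))) := by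
              simp only [Matrix.mul_assoc]
          _ = 1 := by
              rw [hP'P, Matrix.one_mul, ← Matrix.mul_assoc (1 - R) (1 + R) M3, hU'U,
                Matrix.one_mul, hM3'M3]
      · exact mul_entry_le_one hPle (mul_entry_le_one hUle hM3le)
      · exact mul_entry_le_one hM3'le (mul_entry_le_one hU'le hP'le)
      · have hkey : (P * ((1 + R) * M3))ᵀ * B * (P * ((1 + R) * M3)) = M3ᵀ * C * M3 := by
          rw [Matrix.transpose_mul, Matrix.transpose_mul, hCdef, hB1def]
          simp only [Matrix.mul_assoc]
        rw [hkey]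
        have hCeq : C = JBlock.asm i0 D (C i0 i0) := by
          rw [hDdef]
          exact JBlock.eq_asm i0 C hC0 hCk0
        have hM3T : M3ᵀ = JBlock.asm i0 Nᵀ 1 := by rw [hM3, JBlock.asm_transpose]
        rw [hM3T, hCeq, hM3, JBlock.asm_mul, JBlock.asm_mul]
        exact JBlock.asm_isDiag i0 hNdiag _
end Stmt0Aux

/-- Over a non-archimedean local field of residual characteristic not 2 (modeled as a
nontrivially normed field `K` which is locally compact, whose norm is ultrametric, and with
`‖(2:K)‖ = 1`), every symmetric matrix with unit determinant can be diagonalized by a base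
change preserving the sup norm, i.e. by a matrix all of whose entries and inverse entries
have norm at most 1. -/
theorem stmt0 (K : Type*) [NontriviallyNormedField K] [LocallyCompactSpace K]
    (hu : ∀ x y : K, ‖x + y‖ ≤ max ‖x‖ ‖y‖) (h2 : ‖(2 : K)‖ = 1)
    (n : ℕ) (B : Matrix (Fin n) (Fin n) K) (hB : B.IsSymm) (hBdet : IsUnit B.det) :
    ∃ M : Matrix (Fin n) (Fin n) K, IsUnit M.det ∧
      (∀ i j, ‖M i j‖ ≤ 1) ∧ (∀ i j, ‖M⁻¹ i j‖ ≤ 1) ∧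
      (Mᵀ * B * M).IsDiag := by
  haveI : IsUltrametricDist K := ⟨fun x y z => by
    simpa [dist_eq_norm, sub_add_sub_cancel] using hu (x - y) (y - z)⟩
  obtain ⟨M, M', hMM', hM'M, hMle, hM'le, hdiag⟩ := Stmt0Aux.key h2 n B hB
  have hdet : IsUnit M.det := by
    have h := congrArg Matrix.det hMM'
    rw [Matrix.det_mul, Matrix.det_one] at h
    exact IsUnit.of_mul_eq_one _ h
  have hinv : M⁻¹ = M' := Matrix.inv_eq_right_inv hMM'
  exact ⟨M, hdet, hMle, by rw [hinv]; exact hM'le, hdiag⟩
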